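/- arXiv:1002.1335 — 5 statements merged into one kernel-verified Lean document; each statement's English description precedes it below -/
import Mathlib

section
/- In the UILT model (the UISLT model with β_j = 1 for all j, so that ∑_{i ≠ j} α_i ≤ 1 for every j), for any A₀ ⊆ V with |A₀| = K and V \ A₀ = {j_1, …, j_k}, with α_{A₀} := ∑_{i ∈ A₀} α_i, the expected influence satisfies σ^(V, A₀) = K + k·α_{A₀} + α_{A₀} ∑_{m=1}^{k-1} (k − m) · f^m(α_{j_1}, …, α_{j_k}). -/
open Finset

noncomputable def cPath {V : Type*} [Fintype V] [DecidableEq V]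
    (w : V → V → ℝ) (W D : Finset V) (j : V) : ℝ := by
  classical
  exact ∑' k : ℕ, ∑ x : Fin (k + 1) → V,
    if x 0 = j ∧ Function.Injective x ∧
        (∀ m : Fin (k + 1), (m : ℕ) < k → x m ∈ W \ D) ∧ x (Fin.last k) ∈ D
    then ∏ i : Fin k, w (x i.succ) (x i.castSucc) else 0

noncomputable def cPathVia {V : Type*} [Fintype V] [DecidableEq V]
    (w : V → V → ℝ) (W D : Finset V) (j v : V) : ℝ := by
  classical
  exact ∑' k : ℕ, ∑ x : Fin (k + 1) → V,
    if x 0 = j ∧ Function.Injective x ∧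
        (∀ m : Fin (k + 1), (m : ℕ) < k → x m ∈ W \ D) ∧ x (Fin.last k) ∈ D ∧
        (∃ u : Fin (k + 1), (u : ℕ) < k ∧ x u = v)
    then ∏ i : Fin k, w (x i.succ) (x i.castSucc) else 0

noncomputable def sigmaInfl {V : Type*} [Fintype V] [DecidableEq V]
    (w : V → V → ℝ) (W A : Finset V) : ℝ :=
  ∑ j ∈ W, cPath w W A j

def pjv {V : Type*} (w : V → V → ℝ) (j v : V) : List V → ℝ
  | [] => w v j
  | l :: ls => w l j * pjv w l v ls

noncomputable def fPoly {ι : Type*} [DecidableEq ι] (m : ℕ) (T : Finset ι) (x : ι → ℝ) : ℝ :=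
  (Nat.factorial m : ℝ) * ∑ S ∈ T.powersetCard m, ∏ s ∈ S, x s

section aux
variable {n : ℕ}


noncomputable def Ee (α : Fin n → ℝ) (m : ℕ) (T : Finset (Fin n)) : ℝ :=
  ∑ S ∈ T.powersetCard m, ∏ s ∈ S, α s

lemma Erec (α : Fin n → ℝ) (m : ℕ) (T : Finset (Fin n)) :
    ∑ a ∈ T, α a * Ee α m (T.erase a) = ((m : ℝ) + 1) * Ee α (m + 1) T := by
  classical
  have h1 : ∑ a ∈ T, α a * Ee α m (T.erase a)
      = ∑ p ∈ T.sigma (fun a => (T.erase a).powersetCard m), α p.1 * ∏ s ∈ p.2, α s := by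
    rw [Finset.sum_sigma]
    simp [Ee, Finset.mul_sum]
  have h2 : ((m : ℝ) + 1) * Ee α (m + 1) T
      = ∑ p ∈ (T.powersetCard (m + 1)).sigma (fun S => (S : Finset (Fin n))),
          α p.2 * ∏ s ∈ p.1.erase p.2, α s := by
    rw [Finset.sum_sigma, Ee, Finset.mul_sum]
    refine Finset.sum_congr rfl fun S hS => ?_
    have hc : S.card = m + 1 := (Finset.mem_powersetCard.1 hS).2
    have : ∀ a ∈ S, α a * ∏ s ∈ S.erase a, α s = ∏ s ∈ S, α s :=
      fun a ha => Finset.mul_prod_erase S α ha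
    rw [Finset.sum_congr rfl this, Finset.sum_const, hc]
    push_cast
    ring
  rw [h1, h2]
  refine Finset.sum_nbij' (fun p => ⟨insert p.1 p.2, p.1⟩) (fun q => ⟨q.2, q.1.erase q.2⟩)
    ?_ ?_ ?_ ?_ ?_
  · rintro ⟨a, S⟩ hp
    rw [Finset.mem_sigma] at hp ⊢
    obtain ⟨ha, hS⟩ := hp
    rw [Finset.mem_powersetCard] at hS
    have haS : a ∉ S := fun h => (Finset.notMem_erase a T) (hS.1 h)
    refine ⟨Finset.mem_powersetCard.2 ⟨?_, ?_⟩, Finset.mem_insert_self _ _⟩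
    · exact Finset.insert_subset ha (hS.1.trans (Finset.erase_subset _ _))
    · rw [Finset.card_insert_of_notMem haS, hS.2]
  · rintro ⟨S, a⟩ hq
    rw [Finset.mem_sigma] at hq ⊢
    obtain ⟨hS, ha⟩ := hq
    rw [Finset.mem_powersetCard] at hS
    refine ⟨hS.1 ha, Finset.mem_powersetCard.2 ⟨?_, ?_⟩⟩
    · exact Finset.erase_subset_erase a hS.1
    · rw [Finset.card_erase_of_mem ha, hS.2]; omega
  · rintro ⟨a, S⟩ hp
    rw [Finset.mem_sigma] at hp
    have hS := (Finset.mem_powersetCard.1 hp.2).1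
    have haS : a ∉ S := fun h => (Finset.notMem_erase a T) (hS h)
    simp [Finset.erase_insert haS]
  · rintro ⟨S, a⟩ hq
    rw [Finset.mem_sigma] at hq
    simp [Finset.insert_erase hq.2]
  · rintro ⟨a, S⟩ hp
    rw [Finset.mem_sigma] at hp
    have hS := (Finset.mem_powersetCard.1 hp.2).1
    have haS : a ∉ S := fun h => (Finset.notMem_erase a T) (hS h)
    simp [Finset.erase_insert haS]


noncomputable def Mf (α : Fin n → ℝ) (m : ℕ) (T A : Finset (Fin n)) : ℝ := by
  classical
  exact ∑ z : Fin (m + 1) → Fin n,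
    if Function.Injective z ∧ (∀ i : Fin (m + 1), (i : ℕ) < m → z i ∈ T) ∧ z (Fin.last m) ∈ A
    then ∏ i, α (z i) else 0

lemma Mzero (α : Fin n → ℝ) (T A : Finset (Fin n)) : Mf α 0 T A = ∑ a ∈ A, α a := by
  classical
  rw [Mf]
  rw [← Equiv.sum_comp (Equiv.funUnique (Fin 1) (Fin n)).symm]
  have : ∀ a : Fin n,
      (if Function.Injective ((Equiv.funUnique (Fin 1) (Fin n)).symm a) ∧
          (∀ i : Fin 1, (i : ℕ) < 0 → ((Equiv.funUnique (Fin 1) (Fin n)).symm a) i ∈ T) ∧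
          ((Equiv.funUnique (Fin 1) (Fin n)).symm a) (Fin.last 0) ∈ A
        then ∏ i, α (((Equiv.funUnique (Fin 1) (Fin n)).symm a) i) else 0)
      = if a ∈ A then α a else 0 := by
    intro a
    have hinj : Function.Injective ((Equiv.funUnique (Fin 1) (Fin n)).symm a) :=
      fun x y _ => Subsingleton.elim x y
    by_cases ha : a ∈ A
    · rw [if_pos ⟨hinj, fun i hi => absurd hi (by omega), ha⟩, if_pos ha]
      simp [Equiv.funUnique]
    · rw [if_neg (fun h => ha h.2.2), if_neg ha]
  rw [Finset.sum_congr rfl fun a _ => this a]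
  simp [Finset.sum_ite_mem]

/-- key condition equivalence for a cons -/
lemma keyCond {m : ℕ} (T A : Finset (Fin n)) (hTA : Disjoint T A) (a : Fin n) (ha : a ∈ T)
    (y : Fin (m + 1) → Fin n) :
    (Function.Injective (Fin.cons a y : Fin (m + 2) → Fin n) ∧
        (∀ i : Fin (m + 2), (i : ℕ) < m + 1 → (Fin.cons a y : Fin (m + 2) → Fin n) i ∈ T) ∧
        (Fin.cons a y : Fin (m + 2) → Fin n) (Fin.last (m + 1)) ∈ A)
      ↔ (Function.Injective y ∧ (∀ i : Fin (m + 1), (i : ℕ) < m → y i ∈ T.erase a) ∧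
          y (Fin.last m) ∈ A) := by
  have hlast : (Fin.cons a y : Fin (m + 2) → Fin n) (Fin.last (m + 1)) = y (Fin.last m) := by
    rw [← Fin.succ_last, Fin.cons_succ]
  rw [hlast, Fin.cons_injective_iff]
  constructor
  · rintro ⟨⟨hr, hinj⟩, hmem, hA⟩
    refine ⟨hinj, fun i hi => ?_, hA⟩
    refine Finset.mem_erase.2 ⟨fun h => hr ⟨i, h⟩, ?_⟩
    have := hmem i.succ (by simpa using Nat.succ_lt_succ hi)
    rwa [Fin.cons_succ] at this
  · rintro ⟨hinj, hmem, hA⟩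
    have hne : ∀ i : Fin (m + 1), y i ≠ a := by
      intro i
      rcases lt_or_eq_of_le (Nat.lt_succ_iff.mp i.isLt) with hi | hi
      · exact Finset.ne_of_mem_erase (hmem i hi)
      · have hil : i = Fin.last m := Fin.ext hi
        rw [hil]
        intro h
        exact (Finset.disjoint_left.1 hTA ha) (h ▸ hA)
    refine ⟨⟨fun hmemr => ?_, hinj⟩, ?_, hA⟩
    · obtain ⟨i, hi⟩ := hmemr
      exact hne i hi
    · refine fun i => Fin.cases (fun _ => by simpa using ha) (fun i' hi' => ?_) i
      rw [Fin.cons_succ]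
      exact Finset.mem_of_mem_erase (hmem i' (by simpa using hi'))


end aux

lemma Msucc (α : Fin n → ℝ) (m : ℕ) (T A : Finset (Fin n)) (hTA : Disjoint T A) :
    Mf α (m + 1) T A = ∑ a ∈ T, α a * Mf α m (T.erase a) A := by
  classical
  rw [Mf]
  rw [← Equiv.sum_comp (Fin.consEquiv (fun _ : Fin (m + 2) => Fin n))]
  rw [Fintype.sum_prod_type]
  have hterm : ∀ a : Fin n, ∀ y : Fin (m + 1) → Fin n,
      (if Function.Injective ((Fin.consEquiv (fun _ : Fin (m + 2) => Fin n)) (a, y)) ∧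
          (∀ i : Fin (m + 2), (i : ℕ) < m + 1 →
            ((Fin.consEquiv (fun _ : Fin (m + 2) => Fin n)) (a, y)) i ∈ T) ∧
          ((Fin.consEquiv (fun _ : Fin (m + 2) => Fin n)) (a, y)) (Fin.last (m + 1)) ∈ A
        then ∏ i, α (((Fin.consEquiv (fun _ : Fin (m + 2) => Fin n)) (a, y)) i) else 0)
      = if a ∈ T then α a *
          (if Function.Injective y ∧ (∀ i : Fin (m + 1), (i : ℕ) < m → y i ∈ T.erase a) ∧
              y (Fin.last m) ∈ A then ∏ i, α (y i) else 0)
        else 0 := by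
    intro a y
    have happ : ((Fin.consEquiv (fun _ : Fin (m + 2) => Fin n)) (a, y))
        = (Fin.cons a y : Fin (m + 2) → Fin n) := rfl
    rw [happ]
    by_cases ha : a ∈ T
    · rw [if_pos ha, if_congr (keyCond T A hTA a ha y) rfl rfl]
      by_cases hc : Function.Injective y ∧ (∀ i : Fin (m + 1), (i : ℕ) < m → y i ∈ T.erase a) ∧
          y (Fin.last m) ∈ A
      · rw [if_pos hc, if_pos hc, Fin.prod_univ_succ]
        simp
      · rw [if_neg hc, if_neg hc, mul_zero]
    · rw [if_neg ha, if_neg]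
      rintro ⟨-, hmem, -⟩
      exact ha (by simpa using hmem 0 (by simp))
  rw [Finset.sum_congr rfl fun a _ => Finset.sum_congr rfl fun y _ => hterm a y]
  have h2 : ∀ a : Fin n,
      (∑ y : Fin (m + 1) → Fin n, if a ∈ T then α a *
          (if Function.Injective y ∧ (∀ i : Fin (m + 1), (i : ℕ) < m → y i ∈ T.erase a) ∧
              y (Fin.last m) ∈ A then ∏ i, α (y i) else 0)
        else 0)
      = if a ∈ T then α a * Mf α m (T.erase a) A else 0 := by
    intro a
    by_cases ha : a ∈ T
    · simp only [if_pos ha, ← Finset.mul_sum]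
      rw [Mf]
    · simp [ha]
  rw [Finset.sum_congr rfl fun a _ => h2 a]
  simp [Finset.sum_ite_mem]

lemma Meq (α : Fin n → ℝ) (m : ℕ) : ∀ T A : Finset (Fin n), Disjoint T A →
    Mf α m T A = (∑ a ∈ A, α a) * ((m.factorial : ℝ) * Ee α m T) := by
  induction m with
  | zero =>
    intro T A _
    rw [Mzero]
    simp [Ee]
  | succ m ih =>
    intro T A hTA
    rw [Msucc α m T A hTA]
    have hc : ∀ a ∈ T, α a * Mf α m (T.erase a) A
        = (∑ b ∈ A, α b) * (m.factorial : ℝ) * (α a * Ee α m (T.erase a)) := by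
      intro a _
      rw [ih (T.erase a) A (Finset.disjoint_of_subset_left (Finset.erase_subset _ _) hTA)]
      ring
    rw [Finset.sum_congr rfl hc, ← Finset.mul_sum, Erec]
    rw [Nat.factorial_succ]
    push_cast
    ring

noncomputable def pterm (α : Fin n → ℝ) (A₀ : Finset (Fin n)) (j : Fin n) (k : ℕ) : ℝ := by
  classical
  exact ∑ x : Fin (k + 1) → Fin n,
    if x 0 = j ∧ Function.Injective x ∧
        (∀ m : Fin (k + 1), (m : ℕ) < k → x m ∈ Finset.univ \ A₀) ∧ x (Fin.last k) ∈ A₀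
    then ∏ i : Fin k, α (x i.succ) else 0

lemma cPath_eq_tsum (α : Fin n → ℝ) (A₀ : Finset (Fin n)) (j : Fin n) :
    cPath (fun i _ => α i) Finset.univ A₀ j = ∑' k : ℕ, pterm α A₀ j k := by
  rw [cPath]
  rfl

lemma pterm_vanish (α : Fin n → ℝ) (A₀ : Finset (Fin n)) (j : Fin n) (k : ℕ) (hk : n ≤ k) :
    pterm α A₀ j k = 0 := by
  classical
  rw [pterm]
  refine Finset.sum_eq_zero fun x _ => ?_
  rw [if_neg]
  rintro ⟨-, hinj, -, -⟩
  have := Fintype.card_le_of_injective x hinj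
  simp only [Fintype.card_fin] at this
  omega

lemma pterm_zero_mem (α : Fin n → ℝ) (A₀ : Finset (Fin n)) (j : Fin n) (hj : j ∈ A₀) :
    pterm α A₀ j 0 = 1 := by
  classical
  rw [pterm]
  rw [← Equiv.sum_comp (Equiv.funUnique (Fin 1) (Fin n)).symm]
  have : ∀ a : Fin n,
      (if ((Equiv.funUnique (Fin 1) (Fin n)).symm a) 0 = j ∧
          Function.Injective ((Equiv.funUnique (Fin 1) (Fin n)).symm a) ∧
          (∀ m : Fin 1, (m : ℕ) < 0 → ((Equiv.funUnique (Fin 1) (Fin n)).symm a) m ∈ Finset.univ \ A₀) ∧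
          ((Equiv.funUnique (Fin 1) (Fin n)).symm a) (Fin.last 0) ∈ A₀
        then ∏ i : Fin 0, α (((Equiv.funUnique (Fin 1) (Fin n)).symm a) i.succ) else 0)
      = if a = j then 1 else 0 := by
    intro a
    have hinj : Function.Injective ((Equiv.funUnique (Fin 1) (Fin n)).symm a) :=
      fun x y _ => Subsingleton.elim x y
    by_cases haj : a = j
    · subst haj
      rw [if_pos ⟨rfl, hinj, fun i hi => absurd hi (by omega), hj⟩, if_pos rfl]
      simp
    · rw [if_neg (fun h => haj h.1), if_neg haj]
  rw [Finset.sum_congr rfl fun a _ => this a]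
  simp

lemma pterm_zero_not_mem (α : Fin n → ℝ) (A₀ : Finset (Fin n)) (j : Fin n) (hj : j ∉ A₀) :
    pterm α A₀ j 0 = 0 := by
  classical
  rw [pterm]
  refine Finset.sum_eq_zero fun x _ => ?_
  rw [if_neg]
  rintro ⟨h0, -, -, hlast⟩
  exact hj (h0 ▸ hlast)

lemma pterm_succ (α : Fin n → ℝ) (A₀ : Finset (Fin n)) (j : Fin n) (hj : j ∉ A₀) (m : ℕ) :
    pterm α A₀ j (m + 1) = Mf α m ((Finset.univ \ A₀).erase j) A₀ := by
  classical
  have hjT : j ∈ Finset.univ \ A₀ := Finset.mem_sdiff.2 ⟨Finset.mem_univ j, hj⟩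
  have hTA : Disjoint (Finset.univ \ A₀) A₀ := Finset.sdiff_disjoint
  rw [pterm]
  rw [← Equiv.sum_comp (Fin.consEquiv (fun _ : Fin (m + 2) => Fin n))]
  rw [Fintype.sum_prod_type]
  have hterm : ∀ v : Fin n, ∀ y : Fin (m + 1) → Fin n,
      (if ((Fin.consEquiv (fun _ : Fin (m + 2) => Fin n)) (v, y)) 0 = j ∧
          Function.Injective ((Fin.consEquiv (fun _ : Fin (m + 2) => Fin n)) (v, y)) ∧
          (∀ i : Fin (m + 2), (i : ℕ) < m + 1 →
            ((Fin.consEquiv (fun _ : Fin (m + 2) => Fin n)) (v, y)) i ∈ Finset.univ \ A₀) ∧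
          ((Fin.consEquiv (fun _ : Fin (m + 2) => Fin n)) (v, y)) (Fin.last (m + 1)) ∈ A₀
        then ∏ i : Fin (m + 1), α (((Fin.consEquiv (fun _ : Fin (m + 2) => Fin n)) (v, y)) i.succ)
        else 0)
      = if v = j then
          (if Function.Injective y ∧
              (∀ i : Fin (m + 1), (i : ℕ) < m → y i ∈ (Finset.univ \ A₀).erase j) ∧
              y (Fin.last m) ∈ A₀ then ∏ i, α (y i) else 0)
        else 0 := by
    intro v y
    have happ : ((Fin.consEquiv (fun _ : Fin (m + 2) => Fin n)) (v, y))
        = (Fin.cons v y : Fin (m + 2) → Fin n) := rfl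
    rw [happ]
    have hprod : (∏ i : Fin (m + 1), α ((Fin.cons v y : Fin (m + 2) → Fin n) i.succ))
        = ∏ i, α (y i) := by
      refine Finset.prod_congr rfl fun i _ => ?_
      rw [Fin.cons_succ]
    by_cases hv : v = j
    · subst hv
      rw [if_pos rfl]
      have h0 : (Fin.cons v y : Fin (m + 2) → Fin n) 0 = v := rfl
      rw [hprod]
      by_cases hc : Function.Injective y ∧
          (∀ i : Fin (m + 1), (i : ℕ) < m → y i ∈ (Finset.univ \ A₀).erase v) ∧
          y (Fin.last m) ∈ A₀
      · rw [if_pos hc, if_pos ⟨rfl, ((keyCond _ A₀ hTA v hjT y).2 hc).1,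
          ((keyCond _ A₀ hTA v hjT y).2 hc).2.1, ((keyCond _ A₀ hTA v hjT y).2 hc).2.2⟩]
      · rw [if_neg hc, if_neg]
        rintro ⟨-, h1, h2, h3⟩
        exact hc ((keyCond _ A₀ hTA v hjT y).1 ⟨h1, h2, h3⟩)
    · rw [if_neg hv, if_neg]
      rintro ⟨h0, -⟩
      exact hv h0
  rw [Finset.sum_congr rfl fun v _ => Finset.sum_congr rfl fun y _ => hterm v y]
  rw [Finset.sum_comm]
  have h3 : ∀ y : Fin (m + 1) → Fin n,
      (∑ v : Fin n, if v = j then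
          (if Function.Injective y ∧
              (∀ i : Fin (m + 1), (i : ℕ) < m → y i ∈ (Finset.univ \ A₀).erase j) ∧
              y (Fin.last m) ∈ A₀ then ∏ i, α (y i) else 0)
        else 0)
      = (if Function.Injective y ∧
          (∀ i : Fin (m + 1), (i : ℕ) < m → y i ∈ (Finset.univ \ A₀).erase j) ∧
          y (Fin.last m) ∈ A₀ then ∏ i, α (y i) else 0) := by
    intro y
    rw [Finset.sum_ite_eq' Finset.univ j]
    simp
  rw [Finset.sum_congr rfl fun y _ => h3 y, Mf]

lemma cPath_mem (α : Fin n → ℝ) (A₀ : Finset (Fin n)) (j : Fin n) (hj : j ∈ A₀) :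
    cPath (fun i _ => α i) Finset.univ A₀ j = 1 := by
  rw [cPath_eq_tsum]
  rw [tsum_eq_single 0 (fun k hk => ?_)]
  · exact pterm_zero_mem α A₀ j hj
  · classical
    rw [pterm]
    refine Finset.sum_eq_zero fun x _ => ?_
    rw [if_neg]
    rintro ⟨h0, -, hmem, -⟩
    have h0k : ((0 : Fin (k + 1)) : ℕ) < k := by
      simp only [Fin.val_zero]
      omega
    have := hmem 0 h0k
    rw [h0, Finset.mem_sdiff] at this
    exact this.2 hj

lemma cPath_not_mem (α : Fin n → ℝ) (A₀ : Finset (Fin n)) (j : Fin n) (hj : j ∉ A₀) :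
    cPath (fun i _ => α i) Finset.univ A₀ j
      = (∑ a ∈ A₀, α a) *
          ∑ m ∈ Finset.range n, (m.factorial : ℝ) * Ee α m ((Finset.univ \ A₀).erase j) := by
  rw [cPath_eq_tsum]
  rw [tsum_eq_sum (s := Finset.range (n + 1))
    (fun k hk => pterm_vanish α A₀ j k (by simp at hk; omega))]
  rw [Finset.sum_range_succ']
  rw [pterm_zero_not_mem α A₀ j hj, add_zero]
  have hTA : Disjoint ((Finset.univ \ A₀).erase j) A₀ :=
    Finset.disjoint_of_subset_left (Finset.erase_subset _ _) Finset.sdiff_disjoint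
  have : ∀ m ∈ Finset.range n, pterm α A₀ j (m + 1)
      = (∑ a ∈ A₀, α a) * ((m.factorial : ℝ) * Ee α m ((Finset.univ \ A₀).erase j)) := by
    intro m _
    rw [pterm_succ α A₀ j hj m, Meq α m _ A₀ hTA]
  rw [Finset.sum_congr rfl this, ← Finset.mul_sum]


lemma Ecount (α : Fin n → ℝ) (m : ℕ) (Vc : Finset (Fin n)) :
    ∑ j ∈ Vc, Ee α m (Vc.erase j) = ((Vc.card : ℝ) - (m : ℝ)) * Ee α m Vc := by
  classical
  have h1 : ∀ j ∈ Vc, Ee α m (Vc.erase j)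
      = ∑ S ∈ Vc.powersetCard m, if j ∉ S then ∏ s ∈ S, α s else 0 := by
    intro j _
    rw [Ee]
    have hset : (Vc.erase j).powersetCard m
        = (Vc.powersetCard m).filter (fun S => j ∉ S) := by
      ext S
      simp only [Finset.mem_powersetCard, Finset.subset_erase, Finset.mem_filter]
      tauto
    rw [hset, Finset.sum_filter]
  rw [Finset.sum_congr rfl h1, Finset.sum_comm]
  rw [Ee, Finset.mul_sum]
  refine Finset.sum_congr rfl fun S hS => ?_
  obtain ⟨hSsub, hScard⟩ := Finset.mem_powersetCard.1 hS
  have h2 : ∑ j ∈ Vc, (if j ∉ S then ∏ s ∈ S, α s else 0)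
      = ((Vc \ S).card : ℝ) * ∏ s ∈ S, α s := by
    rw [← Finset.sum_filter]
    rw [Finset.sum_const]
    rw [nsmul_eq_mul]
    congr 2
    rw [Finset.sdiff_eq_filter]
  rw [h2, Finset.card_sdiff_of_subset hSsub, hScard]
  have hmle : m ≤ Vc.card := hScard ▸ Finset.card_le_card hSsub
  rw [Nat.cast_sub hmle]

theorem stmt15 (n K k : ℕ) (α : Fin n → ℝ) (hα : ∀ i, 0 ≤ α i)
    (hsum : ∀ j : Fin n, ∑ i ∈ Finset.univ.erase j, α i ≤ 1)
    (A₀ : Finset (Fin n)) (hK : A₀.card = K) (hk : k = n - K)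
    (jf : Fin k → Fin n) (hjf : Function.Injective jf)
    (hjfim : Finset.image jf Finset.univ = Finset.univ \ A₀) :
    sigmaInfl (fun i _ => α i) Finset.univ A₀
      = (K : ℝ) + (k : ℝ) * (∑ i ∈ A₀, α i)
        + (∑ i ∈ A₀, α i) *
            ∑ m ∈ Finset.Icc 1 (k - 1),
              ((k : ℝ) - (m : ℝ)) *
                fPoly m (Finset.univ : Finset (Fin k)) (fun l => α (jf l)) := by
  classical
  set Vc : Finset (Fin n) := Finset.univ \ A₀ with hVc
  set Aα : ℝ := ∑ i ∈ A₀, α i with hAα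
  have hVccard : Vc.card = k := by
    rw [hVc, Finset.card_sdiff_of_subset (Finset.subset_univ A₀), Finset.card_univ, Fintype.card_fin, hK, hk]
  have hkn : k ≤ n := by omega
  -- split sigma
  rw [sigmaInfl, ← Finset.sum_sdiff (Finset.subset_univ A₀)]
  have hA₀sum : ∑ j ∈ A₀, cPath (fun i _ => α i) Finset.univ A₀ j = (K : ℝ) := by
    rw [Finset.sum_congr rfl fun j hj => cPath_mem α A₀ j hj, Finset.sum_const, hK]
    simp
  have hVcsum : ∑ j ∈ Vc, cPath (fun i _ => α i) Finset.univ A₀ j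
      = Aα * ∑ m ∈ Finset.range n, (m.factorial : ℝ) * (((k : ℝ) - (m : ℝ)) * Ee α m Vc) := by
    have h1 : ∀ j ∈ Vc, cPath (fun i _ => α i) Finset.univ A₀ j
        = Aα * ∑ m ∈ Finset.range n, (m.factorial : ℝ) * Ee α m (Vc.erase j) := by
      intro j hj
      exact cPath_not_mem α A₀ j (Finset.mem_sdiff.1 hj).2
    rw [Finset.sum_congr rfl h1, ← Finset.mul_sum]
    congr 1
    rw [Finset.sum_comm]
    refine Finset.sum_congr rfl fun m _ => ?_
    rw [← Finset.mul_sum, Ecount, hVccard]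
  rw [hA₀sum, hVcsum]
  -- truncate the range-n sum to range k
  have htrunc : ∑ m ∈ Finset.range n, (m.factorial : ℝ) * (((k : ℝ) - (m : ℝ)) * Ee α m Vc)
      = ∑ m ∈ Finset.range k, (m.factorial : ℝ) * (((k : ℝ) - (m : ℝ)) * Ee α m Vc) := by
    symm
    refine Finset.sum_subset (Finset.range_subset_range.2 hkn) ?_
    intro m hmn hmk
    simp only [Finset.mem_range, not_lt] at hmn hmk
    rcases eq_or_lt_of_le hmk with h | h
    · rw [← h]
      simp
    · have : Ee α m Vc = 0 := by
        rw [Ee, Finset.powersetCard_eq_empty.2 (by omega), Finset.sum_empty]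
      rw [this]
      ring
  rw [htrunc]
  -- peel off m = 0
  have hpeel : ∑ m ∈ Finset.range k, (m.factorial : ℝ) * (((k : ℝ) - (m : ℝ)) * Ee α m Vc)
      = (k : ℝ) + ∑ m ∈ Finset.Icc 1 (k - 1),
          (m.factorial : ℝ) * (((k : ℝ) - (m : ℝ)) * Ee α m Vc) := by
    rcases Nat.eq_zero_or_pos k with hk0 | hk0
    · subst hk0
      simp
    · have h0 : (0 : ℕ) ∈ Finset.range k := Finset.mem_range.2 hk0
      rw [← Finset.sum_erase_add _ _ h0]
      have herase : (Finset.range k).erase 0 = Finset.Icc 1 (k - 1) := by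
        ext m
        simp only [Finset.mem_erase, Finset.mem_range, Finset.mem_Icc]
        omega
      have hE0 : Ee α 0 Vc = 1 := by simp [Ee]
      rw [herase, hE0]
      simp [add_comm]
  rw [hpeel]
  -- identify Ee with fPoly via jf
  have hmap : Finset.univ.map ⟨jf, hjf⟩ = Vc := by
    rw [Finset.map_eq_image]
    exact hjfim
  have hEf : ∀ m : ℕ, Ee α m Vc
      = ∑ S ∈ (Finset.univ : Finset (Fin k)).powersetCard m, ∏ s ∈ S, α (jf s) := by
    intro m
    rw [Ee, ← hmap, Finset.powersetCard_map, Finset.sum_map]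
    refine Finset.sum_congr rfl fun S _ => ?_
    show ∏ s ∈ Finset.mapEmbedding _ S, α s = _
    rw [Finset.mapEmbedding_apply, Finset.prod_map]
    rfl
  have hfinal : ∀ m ∈ Finset.Icc 1 (k - 1),
      (m.factorial : ℝ) * (((k : ℝ) - (m : ℝ)) * Ee α m Vc)
      = ((k : ℝ) - (m : ℝ)) * fPoly m (Finset.univ : Finset (Fin k)) (fun l => α (jf l)) := by
    intro m _
    rw [hEf m, fPoly]
    ring
  rw [Finset.sum_congr rfl hfinal]
  ring
end

section
/- In the USLT model, where w(i,j) := β_j for all i ≠ j with β_j > 0 and (n−1)β_j ≤ 1 for every j, the probability vector π defined by π_i := (1/β_i) / (∑_{j ∈ V} 1/β_j) is a stationary distribution of the PageRank transition matrix P, i.e. π_i = ∑_{j ∈ V} π_j · P(j,i) for every i ∈ V. -/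
open Finset

theorem stmt16 (n : ℕ) (hn : 2 ≤ n) (β : Fin n → ℝ) (hβ : ∀ j, 0 < β j)
    (hsum : ∀ j : Fin n, ((n : ℝ) - 1) * β j ≤ 1)
    (w : Fin n → Fin n → ℝ)
    (hw : ∀ i j : Fin n, i ≠ j → w i j = β j)
    (hwd : ∀ j : Fin n, w j j = 1 - ∑ i ∈ Finset.univ.erase j, w i j)
    (P : Fin n → Fin n → ℝ) (hP : ∀ j i : Fin n, P j i = w i j)
    (pr : Fin n → ℝ) (hpr : ∀ i, pr i = (1 / β i) / ∑ j, 1 / β j) :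
    ∀ i, pr i = ∑ j, pr j * P j i := by
  intro i
  have hn1 : (1:ℕ) ≤ n := le_trans (by norm_num) hn
  have hS : (0:ℝ) < ∑ j, 1 / β j :=
    Finset.sum_pos (fun j _ => by have := hβ j; positivity) ⟨i, Finset.mem_univ i⟩
  have hSne : (∑ j, 1 / β j) ≠ 0 := ne_of_gt hS
  have hwii : w i i = 1 - ((n:ℝ) - 1) * β i := by
    rw [hwd i]
    congr 1
    rw [Finset.sum_congr rfl (fun k hk => hw k i (Finset.ne_of_mem_erase hk)),
      Finset.sum_const, Finset.card_erase_of_mem (Finset.mem_univ i),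
      Finset.card_univ, Fintype.card_fin, nsmul_eq_mul, Nat.cast_sub hn1, Nat.cast_one]
  have hsplit : ∑ j, pr j * P j i
      = pr i * w i i + ∑ j ∈ Finset.univ.erase i, pr j * w i j := by
    rw [← Finset.add_sum_erase _ _ (Finset.mem_univ i)]
    simp only [hP]
  have herase : ∑ j ∈ Finset.univ.erase i, pr j * w i j
      = ((n:ℝ) - 1) * (1 / ∑ j, 1 / β j) := by
    have hterm : ∀ j ∈ Finset.univ.erase i, pr j * w i j = 1 / ∑ j, 1 / β j := by
      intro j hj
      rw [hw i j (Finset.ne_of_mem_erase hj).symm, hpr j]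
      have hbj := (hβ j).ne'
      field_simp
    rw [Finset.sum_congr rfl hterm]
    rw [Finset.sum_const, Finset.card_erase_of_mem (Finset.mem_univ i),
      Finset.card_univ, Fintype.card_fin, nsmul_eq_mul, Nat.cast_sub hn1, Nat.cast_one]
  rw [hsplit, hwii, herase, hpr i]
  have hbi := (hβ i).ne'
  field_simp
  ring
end

section
/- In the UILT model, where w(i,j) := α_i for all i ≠ j with α_i ≥ 0, ∑_{i ≠ j} α_i ≤ 1 for every j, and ∑_{j ∈ V} α_j > 0, the probability vector π defined by π_i := α_i / (∑_{j ∈ V} α_j) is a stationary distribution of the PageRank transition matrix P, i.e. π_i = ∑_{j ∈ V} π_j · P(j,i) for every i ∈ V. -/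
open Finset

theorem stmt17 (n : ℕ) (hn : 2 ≤ n) (α : Fin n → ℝ) (hα : ∀ i, 0 ≤ α i)
    (hsum : ∀ j : Fin n, ∑ i ∈ Finset.univ.erase j, α i ≤ 1)
    (hpos : 0 < ∑ j, α j)
    (w : Fin n → Fin n → ℝ)
    (hw : ∀ i j : Fin n, i ≠ j → w i j = α i)
    (hwd : ∀ j : Fin n, w j j = 1 - ∑ i ∈ Finset.univ.erase j, w i j)
    (P : Fin n → Fin n → ℝ) (hP : ∀ j i : Fin n, P j i = w i j)
    (pr : Fin n → ℝ) (hpr : ∀ i, pr i = α i / ∑ j, α j) :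
    ∀ i, pr i = ∑ j, pr j * P j i := by
  intro i
  set S := ∑ j, α j with hS
  have hSne : S ≠ 0 := ne_of_gt hpos
  have hwii : w i i = 1 - ∑ k ∈ Finset.univ.erase i, α k := by
    rw [hwd i]
    congr 1
    exact Finset.sum_congr rfl fun k hk => hw k i (Finset.ne_of_mem_erase hk)
  have hsplit : ∑ j, pr j * P j i
      = pr i * P i i + ∑ j ∈ Finset.univ.erase i, pr j * P j i := by
    rw [← Finset.add_sum_erase _ _ (Finset.mem_univ i)]
  rw [hsplit]
  have h1 : ∑ j ∈ Finset.univ.erase i, pr j * P j i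
      = (∑ j ∈ Finset.univ.erase i, α j) / S * α i := by
    rw [Finset.sum_div, Finset.sum_mul]
    refine Finset.sum_congr rfl fun j hj => ?_
    rw [hpr j, hP j i, hw i j (Finset.ne_of_mem_erase hj).symm]
  have h2 : ∑ j ∈ Finset.univ.erase i, α j = S - α i := by
    rw [hS, ← Finset.add_sum_erase _ _ (Finset.mem_univ i)]; ring
  rw [h1, h2, hP i i, hwii, h2, hpr i]
  field_simp
  ring
end

section
/- In the UISLT model, where w(i,j) := α_i β_j for all i ≠ j with α_i ≥ 0, β_i > 0, β_j ∑_{i ≠ j} α_i ≤ 1 for every j, and ∑_{j ∈ V} α_j/β_j > 0, the probability vector π defined by π_i := (α_i/β_i) / (∑_{j ∈ V} α_j/β_j) is a stationary distribution of the PageRank transition matrix P, i.e. π_i = ∑_{j ∈ V} π_j · P(j,i) for every i ∈ V. -/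
open Finset

theorem stmt18 (n : ℕ) (hn : 2 ≤ n) (α β : Fin n → ℝ)
    (hα : ∀ i, 0 ≤ α i) (hβ : ∀ i, 0 < β i)
    (hsum : ∀ j : Fin n, β j * ∑ i ∈ Finset.univ.erase j, α i ≤ 1)
    (hpos : 0 < ∑ j, α j / β j)
    (w : Fin n → Fin n → ℝ)
    (hw : ∀ i j : Fin n, i ≠ j → w i j = α i * β j)
    (hwd : ∀ j : Fin n, w j j = 1 - ∑ i ∈ Finset.univ.erase j, w i j)
    (P : Fin n → Fin n → ℝ) (hP : ∀ j i : Fin n, P j i = w i j)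
    (pr : Fin n → ℝ) (hpr : ∀ i, pr i = (α i / β i) / ∑ j, α j / β j) :
    ∀ i, pr i = ∑ j, pr j * P j i := by
  intro i
  have hS : (∑ j, α j / β j) ≠ 0 := ne_of_gt hpos
  have hβi := (hβ i).ne'
  rw [← Finset.add_sum_erase _ _ (Finset.mem_univ i)]
  have h1 : P i i = 1 - (∑ k ∈ Finset.univ.erase i, α k) * β i := by
    rw [hP, hwd, Finset.sum_mul]
    congr 1
    apply Finset.sum_congr rfl
    intro k hk
    exact hw k i (Finset.ne_of_mem_erase hk)
  have h2 : ∑ j ∈ Finset.univ.erase i, pr j * P j i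
      = (α i / ∑ j, α j / β j) * ∑ j ∈ Finset.univ.erase i, α j := by
    rw [Finset.mul_sum]
    apply Finset.sum_congr rfl
    intro j hj
    rw [hP, hw i j (Finset.ne_of_mem_erase hj).symm, hpr]
    have := (hβ j).ne'
    field_simp
  rw [h1, h2, hpr]
  have hpb : α i / β i / (∑ j, α j / β j) * β i = α i / ∑ j, α j / β j := by
    field_simp
  set A := ∑ j ∈ Finset.univ.erase i, α j
  have : α i / β i / (∑ j, α j / β j) * (1 - A * β i)
      = α i / β i / (∑ j, α j / β j) - (α i / β i / (∑ j, α j / β j) * β i) * A := by ring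
  rw [this, hpb]
  ring
end

section
/- Let G be a finite simple undirected graph on vertex set V that is acyclic (a forest) and has no isolated vertices, with adjacency matrix a and vertex degrees d_j := ∑_{i} a(i,j) ≥ 1, and define the degree-based influence weights w(i,j) := a(i,j)/d_j (so ∑_{i ≠ j} w(i,j) = 1 for every j). Then for every node i ∈ V, the expected influence of the singleton initial set {i} equals its degree plus one: σ^(V,{i}) = d_i + 1. -/
open Finset

set_option linter.unusedSectionVars false
set_option maxHeartbeats 1000000

open SimpleGraph

section AuxStmt19

variable {V : Type*} [Fintype V] [DecidableEq V] (G : SimpleGraph V) [DecidableRel G.Adj]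

def walkOfFn : ∀ {k : ℕ} (x : Fin (k + 1) → V),
    (∀ m : Fin k, G.Adj (x m.castSucc) (x m.succ)) → G.Walk (x 0) (x (Fin.last k))
  | 0, x, _ => Walk.nil.copy rfl (congrArg x (Fin.last_zero).symm)
  | k + 1, x, h =>
      Walk.cons (show G.Adj (x 0) (x 1) by simpa using h 0)
        ((walkOfFn (fun m => x m.succ) (fun m => by
            exact h m.succ) : G.Walk (x (Fin.succ 0)) (x (Fin.succ (Fin.last k)))).copy
          (show x (Fin.succ 0) = x 1 from congrArg x (Fin.succ_zero_eq_one))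
          (show x (Fin.succ (Fin.last k)) = x (Fin.last (k + 1)) from congrArg x (Fin.succ_last k)))

lemma walkOfFn_length : ∀ {k : ℕ} (x : Fin (k + 1) → V)
    (h : ∀ m : Fin k, G.Adj (x m.castSucc) (x m.succ)), (walkOfFn G x h).length = k
  | 0, x, h => by simp [walkOfFn]
  | k + 1, x, h => by rw [walkOfFn, Walk.length_cons, Walk.length_copy, walkOfFn_length]

lemma walkOfFn_support : ∀ {k : ℕ} (x : Fin (k + 1) → V)
    (h : ∀ m : Fin k, G.Adj (x m.castSucc) (x m.succ)),
    (walkOfFn G x h).support = List.ofFn x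
  | 0, x, h => by
    simp [walkOfFn, List.ofFn_succ]
  | k + 1, x, h => by
    rw [walkOfFn, Walk.support_cons, Walk.support_copy, walkOfFn_support]
    simp [List.ofFn_succ]

lemma walkOfFn_getVert : ∀ {k : ℕ} (x : Fin (k + 1) → V)
    (h : ∀ m : Fin k, G.Adj (x m.castSucc) (x m.succ)) (m : Fin (k + 1)),
    (walkOfFn G x h).getVert m = x m
  | 0, x, h, m => by
    have : m = 0 := Fin.fin_one_eq_zero m
    subst this
    simp [walkOfFn]
  | k + 1, x, h, m => by
    induction m using Fin.cases with
    | zero => simp [walkOfFn]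
    | succ m' =>
      have := walkOfFn_getVert (fun m => x m.succ) (fun m => by
        exact h m.succ) m'
      rw [walkOfFn, Fin.val_succ, Walk.getVert_cons_succ, Walk.getVert_copy, this]

lemma walkOfFn_isPath {k : ℕ} (x : Fin (k + 1) → V)
    (h : ∀ m : Fin k, G.Adj (x m.castSucc) (x m.succ)) (hinj : Function.Injective x) :
    (walkOfFn G x h).IsPath := by
  rw [Walk.isPath_def, walkOfFn_support]
  exact List.nodup_ofFn.2 hinj

lemma path_getVert_injOn {u v : V} {p : G.Walk u v} (hp : p.IsPath) :
    ∀ m n : ℕ, m ≤ p.length → n ≤ p.length → p.getVert m = p.getVert n → m = n := by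
  induction p with
  | nil => intro m n hm hn _; simp only [Walk.length_nil, Nat.le_zero] at hm hn; omega
  | cons hadj q ih =>
    rename_i a b c
    rw [Walk.cons_isPath_iff] at hp
    intro m n hm hn hmn
    match m, n with
    | 0, 0 => rfl
    | 0, n + 1 =>
      exfalso
      apply hp.2
      rw [Walk.mem_support_iff_exists_getVert]
      refine ⟨n, ?_, ?_⟩
      · rw [← Walk.getVert_cons_succ q hadj, ← hmn, Walk.getVert_zero]
      · simpa using hn
    | m + 1, 0 =>
      exfalso
      apply hp.2
      rw [Walk.mem_support_iff_exists_getVert]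
      refine ⟨m, ?_, ?_⟩
      · rw [← Walk.getVert_cons_succ q hadj, hmn, Walk.getVert_zero]
      · simpa using hm
    | m + 1, n + 1 =>
      have := ih hp.1 m n (by simpa using hm) (by simpa using hn)
        (by simpa [Walk.getVert_cons_succ] using hmn)
      omega

noncomputable def Wt {u v : V} (p : G.Walk u v) : ℝ :=
  ∏ m : Fin p.length, 1 / (G.degree (p.getVert m) : ℝ)

@[simp] lemma Wt_nil {u : V} : Wt G (Walk.nil : G.Walk u u) = 1 := by
  unfold Wt; exact Fin.prod_univ_zero _

@[simp] lemma Wt_copy {u v u' v' : V} (p : G.Walk u v) (hu : u = u') (hv : v = v') :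
    Wt G (p.copy hu hv) = Wt G p := by
  subst hu; subst hv; rfl

lemma Wt_cons {u v x : V} (h : G.Adj x u) (p : G.Walk u v) :
    Wt G (Walk.cons h p) = 1 / (G.degree x : ℝ) * Wt G p := by
  rw [Wt, Wt]
  rw [show (Walk.cons h p).length = p.length + 1 from rfl]
  rw [Fin.prod_univ_succ]
  simp only [Fin.val_zero, Walk.getVert_zero, Fin.val_succ, Walk.getVert_cons_succ]
  rfl

section
variable (hac : G.IsAcyclic) (hdeg : ∀ v : V, 0 < G.degree v) (i : V)

include hac in
lemma cPath_eq_wt {j : V} (p : G.Walk j i) (hp : p.IsPath) :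
    cPath (fun a b => if G.Adj a b then (1 : ℝ) / (G.degree b : ℝ) else 0)
      Finset.univ {i} j = Wt G p := by
  classical
  unfold cPath
  have key : ∀ (k : ℕ) (x : Fin (k + 1) → V), x 0 = j → Function.Injective x →
      x (Fin.last k) = i →
      (∏ m : Fin k, (if G.Adj (x m.succ) (x m.castSucc) then
        (1 : ℝ) / (G.degree (x m.castSucc) : ℝ) else 0)) ≠ 0 →
      k = p.length ∧ ∀ m : Fin (k + 1), x m = p.getVert m := by
    intro k x hx0 hinj hlast hprod
    have hadj : ∀ m : Fin k, G.Adj (x m.castSucc) (x m.succ) := by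
      intro m
      by_contra hA
      apply hprod
      apply Finset.prod_eq_zero (Finset.mem_univ m)
      rw [if_neg]
      intro hA'; exact hA hA'.symm
    have hqp : ((walkOfFn G x hadj).copy hx0 hlast).IsPath := by
      rw [Walk.isPath_copy]
      exact walkOfFn_isPath G x hadj hinj
    have huniq : (⟨(walkOfFn G x hadj).copy hx0 hlast, hqp⟩ : G.Path j i) = ⟨p, hp⟩ :=
      hac.path_unique _ _
    have hq_eq : (walkOfFn G x hadj).copy hx0 hlast = p := congrArg Subtype.val huniq
    have hlen : k = p.length := by
      rw [← hq_eq, Walk.length_copy, walkOfFn_length]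
    refine ⟨hlen, fun m => ?_⟩
    rw [← hq_eq, Walk.getVert_copy, walkOfFn_getVert]
  rw [tsum_eq_single p.length]
  · -- inner sum at k = p.length
    rw [Finset.sum_eq_single_of_mem (fun m : Fin (p.length + 1) => p.getVert m)
      (Finset.mem_univ _)]
    · rw [if_pos]
      · unfold Wt
        apply Finset.prod_congr rfl
        intro m _
        beta_reduce
        rw [if_pos]
        · rw [Fin.coe_castSucc]
        · exact (p.adj_getVert_succ m.isLt).symm
      · beta_reduce
        refine ⟨Walk.getVert_zero p, ?_, ?_, ?_⟩
        · intro a b hab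
          exact Fin.ext (path_getVert_injOn G hp a b (Nat.lt_succ_iff.mp a.isLt)
            (Nat.lt_succ_iff.mp b.isLt) hab)
        · intro m hm
          rw [Finset.mem_sdiff]
          refine ⟨Finset.mem_univ _, ?_⟩
          rw [Finset.mem_singleton]
          intro hmi
          have : (m : ℕ) = p.length := path_getVert_injOn G hp m p.length
            (Nat.lt_succ_iff.mp m.isLt) le_rfl (by rw [hmi, Walk.getVert_length])
          omega
        · rw [Finset.mem_singleton]
          simp [Walk.getVert_length]
    · intro x _ hx
      by_cases hC : x 0 = j ∧ Function.Injective x ∧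
          (∀ m : Fin (p.length + 1), (m : ℕ) < p.length → x m ∈ Finset.univ \ {i}) ∧
          x (Fin.last p.length) ∈ ({i} : Finset V)
      · rw [if_pos hC]
        by_contra hprod
        obtain ⟨h1, h2, h3, h4⟩ := hC
        rw [Finset.mem_singleton] at h4
        have := (key p.length x h1 h2 h4 hprod).2
        exact hx (funext this)
      · rw [if_neg hC]
  · intro k hk
    apply Finset.sum_eq_zero
    intro x _
    by_cases hC : x 0 = j ∧ Function.Injective x ∧
        (∀ m : Fin (k + 1), (m : ℕ) < k → x m ∈ Finset.univ \ {i}) ∧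
        x (Fin.last k) ∈ ({i} : Finset V)
    · rw [if_pos hC]
      by_contra hprod
      obtain ⟨h1, h2, h3, h4⟩ := hC
      rw [Finset.mem_singleton] at h4
      exact hk (key k x h1 h2 h4 hprod).1
    · rw [if_neg hC]

lemma cPath_eq_zero {j : V} (hnr : ¬ G.Reachable j i) :
    cPath (fun a b => if G.Adj a b then (1 : ℝ) / (G.degree b : ℝ) else 0)
      Finset.univ {i} j = 0 := by
  classical
  unfold cPath
  have : ∀ k : ℕ, (∑ x : Fin (k + 1) → V,
      if x 0 = j ∧ Function.Injective x ∧
          (∀ m : Fin (k + 1), (m : ℕ) < k → x m ∈ Finset.univ \ ({i} : Finset V)) ∧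
          x (Fin.last k) ∈ ({i} : Finset V)
      then ∏ m : Fin k, (if G.Adj (x m.succ) (x m.castSucc) then
        (1 : ℝ) / (G.degree (x m.castSucc) : ℝ) else 0) else 0) = 0 := by
    intro k
    apply Finset.sum_eq_zero
    intro x _
    by_cases hC : x 0 = j ∧ Function.Injective x ∧
        (∀ m : Fin (k + 1), (m : ℕ) < k → x m ∈ Finset.univ \ ({i} : Finset V)) ∧
        x (Fin.last k) ∈ ({i} : Finset V)
    · rw [if_pos hC]
      by_contra hprod
      obtain ⟨h1, h2, h3, h4⟩ := hC
      rw [Finset.mem_singleton] at h4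
      have hadj : ∀ m : Fin k, G.Adj (x m.castSucc) (x m.succ) := by
        intro m
        by_contra hA
        apply hprod
        apply Finset.prod_eq_zero (Finset.mem_univ m)
        rw [if_neg]
        intro hA'; exact hA hA'.symm
      exact hnr ⟨(walkOfFn G x hadj).copy h1 h4⟩
    · rw [if_neg hC]
  simp only [this, tsum_zero]

noncomputable def nxt (i j : V) : V :=
  if h : G.Reachable j i then ((Classical.choice h).toPath : G.Walk j i).getVert 1 else j

include hac in
lemma nxt_eq {j : V} (p : G.Walk j i) (hp : p.IsPath) : nxt G i j = p.getVert 1 := by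
  have h : G.Reachable j i := ⟨p⟩
  rw [nxt, dif_pos h]
  have := hac.path_unique (Classical.choice h).toPath ⟨p, hp⟩
  rw [show ((Classical.choice h).toPath : G.Walk j i) = p from congrArg Subtype.val this]

noncomputable def Len (i j : V) : ℕ :=
  if h : G.Reachable j i then ((Classical.choice h).toPath : G.Walk j i).length else 0

include hac in
lemma Len_eq {j : V} (p : G.Walk j i) (hp : p.IsPath) : Len G i j = p.length := by
  have h : G.Reachable j i := ⟨p⟩
  rw [Len, dif_pos h]
  have := hac.path_unique (Classical.choice h).toPath ⟨p, hp⟩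
  rw [show ((Classical.choice h).toPath : G.Walk j i) = p from congrArg Subtype.val this]

include hac in
lemma nxt_spec {j : V} (hr : G.Reachable j i) (hji : j ≠ i) :
    G.Adj j (nxt G i j) ∧ Len G i j = Len G i (nxt G i j) + 1 ∧
      cPath (fun a b => if G.Adj a b then (1 : ℝ) / (G.degree b : ℝ) else 0)
        Finset.univ {i} j
      = 1 / (G.degree j : ℝ) *
        cPath (fun a b => if G.Adj a b then (1 : ℝ) / (G.degree b : ℝ) else 0)
          Finset.univ {i} (nxt G i j) := by
  classical
  set p : G.Walk j i := ((Classical.choice hr).toPath : G.Walk j i) with hpdef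
  have hp : p.IsPath := (Classical.choice hr).toPath.2
  have hnil : ¬ p.Nil := Walk.not_nil_of_ne hji
  have hnxt : nxt G i j = p.getVert 1 := nxt_eq G hac i p hp
  have hcons : Walk.cons (p.adj_snd hnil) p.tail = p := Walk.cons_tail_eq p hnil
  have htail : p.tail.IsPath := hp.tail
  refine ⟨?_, ?_, ?_⟩
  · rw [hnxt]; exact p.adj_snd hnil
  · rw [Len_eq G hac i p hp, hnxt, Len_eq G hac i p.tail htail]
    nth_rewrite 1 [← hcons]
    rw [Walk.length_cons]
  · rw [cPath_eq_wt G hac i p hp, hnxt, cPath_eq_wt G hac i p.tail htail]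
    nth_rewrite 1 [← hcons]
    rw [Wt_cons]

include hac in
lemma path_from_i : ∀ (p : G.Walk i i), p.IsPath → p = Walk.nil := by
  intro p hp
  exact congrArg Subtype.val (hac.path_unique ⟨p, hp⟩ ⟨Walk.nil, Walk.IsPath.nil⟩)

include hac in
lemma fiber_iff {v : V} (hrv : G.Reachable v i) (j : V) :
    (G.Reachable j i ∧ j ≠ i ∧ nxt G i j = v) ↔
      (G.Adj j v ∧ (v = i ∨ j ≠ nxt G i v)) := by
  constructor
  · rintro ⟨hr, hji, hnxt⟩
    have h1 := nxt_spec G hac i hr hji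
    refine ⟨hnxt ▸ h1.1, ?_⟩
    by_contra hcon
    push_neg at hcon
    obtain ⟨hvi, hjv⟩ := hcon
    have h2 := nxt_spec G hac i hrv hvi
    have e1 : Len G i j = Len G i v + 1 := by rw [← hnxt]; exact h1.2.1
    have e2 : Len G i v = Len G i j + 1 := by rw [hjv]; exact h2.2.1
    omega
  · rintro ⟨hadj, hor⟩
    have hr : G.Reachable j i := hadj.reachable.trans hrv
    have hji : j ≠ i := by
      intro hj
      have hvi : v ≠ i := by
        intro h
        rw [hj, h] at hadj
        exact G.loopless.irrefl i hadj
      have hadj' : G.Adj v i := by rw [← hj]; exact hadj.symm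
      have hcons : (Walk.cons hadj' (Walk.nil : G.Walk i i)).IsPath := by
        rw [Walk.cons_isPath_iff]
        exact ⟨Walk.IsPath.nil, by simp [hvi]⟩
      have hnv : nxt G i v = i := by
        rw [nxt_eq G hac i _ hcons]
        simp [Walk.getVert_cons_succ]
      rcases hor with h | h
      · exact hvi h
      · exact h (by rw [hj, hnv])
    set pv : G.Walk v i := ((Classical.choice hrv).toPath : G.Walk v i) with hpvdef
    have hpv : pv.IsPath := (Classical.choice hrv).toPath.2
    have hjmem : j ∉ pv.support := by
      intro hmem
      rcases hor with hvi | hne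
      · have hcopy : (pv.copy hvi rfl) = Walk.nil :=
          path_from_i G hac i (pv.copy hvi rfl) (by rw [Walk.isPath_copy]; exact hpv)
        have hsup : pv.support = [i] := by
          have h2 := congrArg Walk.support hcopy
          rw [Walk.support_copy] at h2
          simpa using h2
        rw [hsup] at hmem
        simp at hmem
        exact hji hmem
      · -- takeUntil gives a path from v to j; so does the single edge; uniqueness
        have ht : (pv.takeUntil j hmem).IsPath := hpv.takeUntil hmem
        have hvj : v ≠ j := hadj.ne'
        have hr' : (Walk.cons hadj.symm (Walk.nil : G.Walk j j)).IsPath := by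
          rw [Walk.cons_isPath_iff]
          exact ⟨Walk.IsPath.nil, by simp [hvj]⟩
        have hteq : pv.takeUntil j hmem = Walk.cons hadj.symm Walk.nil :=
          congrArg Subtype.val (hac.path_unique ⟨_, ht⟩ ⟨_, hr'⟩)
        have hspec := pv.take_spec hmem
        rw [hteq] at hspec
        have : nxt G i v = j := by
          rw [nxt_eq G hac i pv hpv, ← hspec]
          simp [Walk.getVert_cons_succ]
        exact hne this.symm
    have hq : (Walk.cons hadj pv).IsPath := by
      rw [Walk.cons_isPath_iff]
      exact ⟨hpv, hjmem⟩
    refine ⟨hr, hji, ?_⟩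
    rw [nxt_eq G hac i _ hq]
    simp [Walk.getVert_cons_succ]

end


end AuxStmt19

theorem stmt19 {V : Type*} [Fintype V] [DecidableEq V]
    (G : SimpleGraph V) [DecidableRel G.Adj]
    (hac : G.IsAcyclic) (hdeg : ∀ v : V, 0 < G.degree v) (i : V) :
    sigmaInfl (fun a b => if G.Adj a b then (1 : ℝ) / (G.degree b : ℝ) else 0)
        Finset.univ {i}
      = (G.degree i : ℝ) + 1 := by
  classical
  unfold sigmaInfl
  set f : V → ℝ := cPath (fun a b => if G.Adj a b then (1 : ℝ) / (G.degree b : ℝ) else 0)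
    Finset.univ ({i} : Finset V) with hf
  set R : Finset V := Finset.univ.filter (fun j => G.Reachable j i) with hR
  have hmemR : ∀ j, j ∈ R ↔ G.Reachable j i := by intro j; simp [hR]
  have hiR : i ∈ R := (hmemR i).2 (Reachable.refl i)
  have hczero : ∀ j ∈ Finset.univ, j ∉ R → f j = 0 := by
    intro j _ hj
    rw [hf]
    exact cPath_eq_zero G i (fun hr => hj ((hmemR j).2 hr))
  have hsum : ∑ j : V, f j = ∑ j ∈ R, f j :=
    (Finset.sum_subset (Finset.subset_univ R) hczero).symm
  have hci : f i = 1 := by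
    rw [hf, cPath_eq_wt G hac i Walk.nil Walk.IsPath.nil]
    exact Wt_nil G
  have hrec : ∀ j ∈ R.erase i, (G.degree j : ℝ) * f j = f (nxt G i j) := by
    intro j hj
    rw [Finset.mem_erase] at hj
    have hr := (hmemR j).1 hj.2
    have h := (nxt_spec G hac i hr hj.1).2.2
    rw [hf, h]
    have : (G.degree j : ℝ) ≠ 0 := Nat.cast_ne_zero.2 (hdeg j).ne'
    field_simp
  have hmaps : ∀ j ∈ R.erase i, nxt G i j ∈ R := by
    intro j hj
    rw [Finset.mem_erase] at hj
    have hr := (hmemR j).1 hj.2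
    have hadj := (nxt_spec G hac i hr hj.1).1
    exact (hmemR _).2 (hadj.symm.reachable.trans hr)
  have hT : ∑ j ∈ R.erase i, (G.degree j : ℝ) * f j
      = ∑ v ∈ R, (((R.erase i).filter (fun j => nxt G i j = v)).card : ℝ) * f v := by
    rw [Finset.sum_congr rfl hrec,
      ← Finset.sum_fiberwise_of_maps_to hmaps (fun j => f (nxt G i j))]
    apply Finset.sum_congr rfl
    intro v _
    rw [Finset.sum_congr rfl (fun j hj => by rw [(Finset.mem_filter.1 hj).2]),
      Finset.sum_const, nsmul_eq_mul]
  have hfib : ∀ v ∈ R, (R.erase i).filter (fun j => nxt G i j = v)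
      = if v = i then G.neighborFinset i else (G.neighborFinset v).erase (nxt G i v) := by
    intro v hv
    have hrv := (hmemR v).1 hv
    ext j
    rw [Finset.mem_filter]
    have hiff := fiber_iff G hac i hrv j
    by_cases hvi : v = i
    · rw [if_pos hvi]
      simp only [Finset.mem_erase, mem_neighborFinset]
      constructor
      · rintro ⟨⟨hj1, hj2⟩, hj3⟩
        have h2 := hiff.1 ⟨(hmemR j).1 hj2, hj1, hj3⟩
        rw [← hvi]
        exact h2.1.symm
      · intro hadj
        have h2 := hiff.2 ⟨by rw [hvi]; exact hadj.symm, Or.inl hvi⟩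
        exact ⟨⟨h2.2.1, (hmemR j).2 h2.1⟩, h2.2.2⟩
    · rw [if_neg hvi]
      simp only [Finset.mem_erase, mem_neighborFinset]
      constructor
      · rintro ⟨⟨hj1, hj2⟩, hj3⟩
        have h2 := hiff.1 ⟨(hmemR j).1 hj2, hj1, hj3⟩
        rcases h2.2 with h | h
        · exact absurd h hvi
        · exact ⟨h, h2.1.symm⟩
      · rintro ⟨hne, hadj⟩
        have h2 := hiff.2 ⟨hadj.symm, Or.inr hne⟩
        exact ⟨⟨h2.2.1, (hmemR j).2 h2.1⟩, h2.2.2⟩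
  have hcard : ∀ v ∈ R.erase i,
      (((R.erase i).filter (fun j => nxt G i j = v)).card : ℝ) = (G.degree v : ℝ) - 1 := by
    intro v hv
    rw [Finset.mem_erase] at hv
    have hrv := (hmemR v).1 hv.2
    have hadj := (nxt_spec G hac i hrv hv.1).1
    rw [hfib v hv.2, if_neg hv.1,
      Finset.card_erase_of_mem (by rw [mem_neighborFinset]; exact hadj),
      card_neighborFinset_eq_degree, Nat.cast_sub (hdeg v), Nat.cast_one]
  have hcardi : (((R.erase i).filter (fun j => nxt G i j = i)).card : ℝ) = (G.degree i : ℝ) := by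
    rw [hfib i hiR, if_pos rfl, card_neighborFinset_eq_degree]
  have h1 : ∑ j ∈ R.erase i, (G.degree j : ℝ) * f j
      = (G.degree i : ℝ) + ∑ v ∈ R.erase i, ((G.degree v : ℝ) - 1) * f v := by
    rw [hT, ← Finset.add_sum_erase R _ hiR, hcardi, hci, mul_one]
    congr 1
    apply Finset.sum_congr rfl
    intro v hv
    rw [hcard v hv]
  have h2 : ∑ j ∈ R.erase i, (G.degree j : ℝ) * f j
      = ∑ j ∈ R.erase i, ((G.degree j : ℝ) - 1) * f j + ∑ j ∈ R.erase i, f j := by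
    rw [← Finset.sum_add_distrib]
    apply Finset.sum_congr rfl
    intro j _
    ring
  have key : ∑ j ∈ R.erase i, f j = (G.degree i : ℝ) := by linarith
  rw [hsum, ← Finset.add_sum_erase R f hiR, hci, key]
  ring
end
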